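/- Let 0 < μ ≤ 1, ζ > 0, ϑ ≥ μζ, 0 < θ ≤ 1, λ > 0. Let (Ω, F, ℙ) be a probability space carrying i.i.d. real random variables Y₁, Y₂, … , set S_m = Y₁ + Y₂ + ⋯ + Y_m and F_m = ℙ[S_m ≤ y] for a fixed y ∈ ℝ, and let H : Ω → [0,∞) be a random variable with 𝔼[E_{μ,ϑ}^{ζ}(2λ H^θ)] < ∞. Define for u ≥ 0 the cdf of the fractional generalized compound process W(y,u) = 𝟙_{y ≥ 0} · Γ(ϑ) E_{μ,ϑ}^{ζ}(−λ u^θ) + ∑_{m=1}^∞ P(m,u) F_m. Then 𝔼[W(y,H)] = 𝟙_{y ≥ 0} Γ(ϑ) ∑_{k=0}^∞ ( (ζ)_k (−λ)^k / (k! Γ(μk+ϑ)) ) 𝔼[H^{θk}] + Γ(ϑ) ∑_{m=1}^∞ ( λ^m (ζ)_m / m! ) F_m ∑_{l=0}^∞ ( (ζ+m)_l (−λ)^l / (l! Γ(μ(l+m)+ϑ)) ) 𝔼[H^{θ(l+m)}], with all series converging absolutely. -/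

import Mathlib

open Real MeasureTheory ProbabilityTheory Filter
open scoped ENNReal NNReal

set_option maxHeartbeats 2000000


/-- Rising factorial (Pochhammer symbol) `(ζ)_n = Γ(ζ+n)/Γ(ζ)`. -/
noncomputable def risingFactorial (ζ : ℝ) (n : ℕ) : ℝ :=
  Real.Gamma (ζ + n) / Real.Gamma ζ

/-- Three-parameter (Prabhakar) Mittag-Leffler function. -/
noncomputable def mittagLeffler (μ ϑ ζ z : ℝ) : ℝ :=
  ∑' m : ℕ, risingFactorial ζ m * z ^ m / (m.factorial * Real.Gamma (μ * m + ϑ))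

/-- Probability function of the fractional counting process. -/
noncomputable def fcpP (μ ϑ ζ θ lam : ℝ) (n : ℕ) (t : ℝ) : ℝ :=
  risingFactorial ζ n * Real.Gamma ϑ * (lam * t ^ θ) ^ n / n.factorial *
    ∑' k : ℕ, risingFactorial (ζ + n) k * (-(lam * t ^ θ)) ^ k /
      (k.factorial * Real.Gamma (μ * (n + k : ℕ) + ϑ))

lemma rising_pos {c : ℝ} (hc : 0 < c) (n : ℕ) : 0 < risingFactorial c n :=
  div_pos (Real.Gamma_pos_of_pos (by positivity)) (Real.Gamma_pos_of_pos hc)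

lemma rising_mul {c : ℝ} (hc : 0 < c) (n k : ℕ) :
    risingFactorial c n * risingFactorial (c + n) k = risingFactorial c (n + k) := by
  unfold risingFactorial
  have h1 : Real.Gamma c ≠ 0 := ne_of_gt (Real.Gamma_pos_of_pos hc)
  have h2 : Real.Gamma (c + n) ≠ 0 := ne_of_gt (Real.Gamma_pos_of_pos (by positivity))
  have h3 : c + (n : ℝ) + (k : ℝ) = c + ((n + k : ℕ) : ℝ) := by push_cast; ring
  rw [← h3]
  field_simp

lemma measurable_tsum_real {α ι : Type*} [MeasurableSpace α] [Denumerable ι] {f : ι → α → ℝ}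
    (hf : ∀ i, Measurable (f i)) (hsum : ∀ x, Summable fun i => f i x) :
    Measurable fun x => ∑' i, f i x := by
  set e : ℕ ≃ ι := (Denumerable.eqv ι).symm with he
  have h1 : (fun x => ∑' i, f i x) = fun x => ∑' n, f (e n) x := by
    funext x; exact (e.tsum_eq fun i => f i x).symm
  rw [h1]
  apply measurable_of_tendsto_metrizable
    (f := fun n x => ∑ i ∈ Finset.range n, f (e i) x)
    (fun n => Finset.measurable_sum _ fun i _ => hf _)
  rw [tendsto_pi_nhds]
  intro x
  exact ((hsum x).comp_injective e.injective).hasSum.tendsto_sum_nat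

lemma gamma_interp {x μ : ℝ} (hx : 0 < x) (hμ : 0 < μ) (hμ1 : μ ≤ 1) :
    Real.Gamma (x + 1) ≤ Real.Gamma (x + μ) * (x + μ) ^ (1 - μ) := by
  have hxμ : 0 < x + μ := by linarith
  have hxμ1 : 0 < x + μ + 1 := by linarith
  have h := Real.convexOn_log_Gamma.2 (Set.mem_Ioi.2 hxμ) (Set.mem_Ioi.2 hxμ1)
    (le_of_lt hμ) (by linarith : (0:ℝ) ≤ 1 - μ) (by ring)
  have hcomb : μ • (x + μ) + (1 - μ) • (x + μ + 1) = x + 1 := by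
    simp only [smul_eq_mul]; ring
  rw [hcomb] at h
  have hG1 : Real.Gamma (x + μ + 1) = (x + μ) * Real.Gamma (x + μ) :=
    Real.Gamma_add_one (ne_of_gt hxμ)
  have hGpos : 0 < Real.Gamma (x + μ) := Real.Gamma_pos_of_pos hxμ
  have hGpos1 : 0 < Real.Gamma (x + 1) := Real.Gamma_pos_of_pos (by linarith)
  simp only [Function.comp] at h
  rw [hG1, Real.log_mul (ne_of_gt hxμ) (ne_of_gt hGpos)] at h
  have h2 : Real.log (Real.Gamma (x + 1)) ≤
      Real.log (Real.Gamma (x + μ)) + (1 - μ) * Real.log (x + μ) := by simp only [smul_eq_mul] at h; nlinarith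
  calc Real.Gamma (x + 1) = Real.exp (Real.log (Real.Gamma (x + 1))) :=
        (Real.exp_log hGpos1).symm
    _ ≤ Real.exp (Real.log (Real.Gamma (x + μ)) + (1 - μ) * Real.log (x + μ)) :=
        Real.exp_le_exp.2 h2
    _ = Real.Gamma (x + μ) * (x + μ) ^ (1 - μ) := by
        rw [Real.exp_add, Real.exp_log hGpos, Real.rpow_def_of_pos hxμ, mul_comm (Real.log (x+μ))]


lemma aux_summable {μ b c : ℝ} (hμ : 0 < μ) (hμ1 : μ ≤ 1) (hb : 0 < b) (hc : 0 < c)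
    {z : ℝ} (hz : 0 ≤ z) :
    Summable (fun l : ℕ => Real.Gamma (c + l) * z ^ l / (l.factorial * Real.Gamma (μ * l + b))) := by
  rcases eq_or_lt_of_le hz with hz0 | hzpos
  · apply summable_of_ne_finset_zero (s := {0})
    intro l hl
    have : l ≠ 0 := by simpa using hl
    simp [← hz0, zero_pow this]
  · apply summable_of_ratio_norm_eventually_le (r := 1/2) (by norm_num)
    have hTx : Tendsto (fun l : ℕ => μ * l + b + μ) atTop atTop := by
      have h1 : Tendsto (fun l : ℕ => (l : ℝ)) atTop atTop := tendsto_natCast_atTop_atTop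
      have h2 : Tendsto (fun l : ℕ => μ * l) atTop atTop := h1.const_mul_atTop hμ
      simpa [add_assoc] using tendsto_atTop_add_const_right atTop (b + μ) h2
    have hT : Tendsto (fun l : ℕ => (μ * l + b + μ) ^ μ) atTop atTop :=
      (tendsto_rpow_atTop hμ).comp hTx
    filter_upwards [hT.eventually_ge_atTop (max 1 (4 * z * (c + 1))),
      eventually_ge_atTop 1] with l hQ hl1
    set x : ℝ := μ * l + b with hxdef
    have hx : 0 < x := by positivity
    have hxμ : 0 < x + μ := by positivity
    have hQ4 : 4 * z * (c + 1) ≤ (x + μ) ^ μ := le_trans (le_max_right _ _) hQ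
    have hcl : (0:ℝ) < c + l := by positivity
    have hlp : (0:ℝ) < (l:ℝ) + 1 := by positivity
    -- Gamma values positive
    have hGx : 0 < Real.Gamma x := Real.Gamma_pos_of_pos hx
    have hGxμ : 0 < Real.Gamma (x + μ) := Real.Gamma_pos_of_pos hxμ
    have hGcl : 0 < Real.Gamma (c + l) := Real.Gamma_pos_of_pos (by positivity)
    -- key : Γ x * (x+μ)^μ ≤ 2 Γ(x+μ)
    have h1 : Real.Gamma (x + 1) ≤ Real.Gamma (x + μ) * (x + μ) ^ (1 - μ) :=
      gamma_interp hx hμ hμ1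
    have h1' : x * Real.Gamma x ≤ Real.Gamma (x + μ) * (x + μ) ^ (1 - μ) := by
      rwa [Real.Gamma_add_one (ne_of_gt hx)] at h1
    have h2 : (x + μ) ^ (1 - μ) * (x + μ) ^ μ = x + μ := by
      rw [← Real.rpow_add hxμ]; norm_num
    have hxx : x + μ ≤ 2 * x := by
      have : μ ≤ μ * l := by
        nlinarith [(by exact_mod_cast hl1 : (1:ℝ) ≤ (l:ℝ))]
      simp only [hxdef]; linarith
    have hQpos : 0 < (x + μ) ^ μ := Real.rpow_pos_of_pos hxμ _
    have s1 : Real.Gamma x * (x + μ) ^ μ ≤ 2 * Real.Gamma (x + μ) := by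
      have hm : x * Real.Gamma x * (x + μ) ^ μ ≤ Real.Gamma (x + μ) * (x + μ) := by
        calc x * Real.Gamma x * (x + μ) ^ μ
            ≤ Real.Gamma (x + μ) * (x + μ) ^ (1 - μ) * (x + μ) ^ μ :=
              mul_le_mul_of_nonneg_right h1' (le_of_lt hQpos)
          _ = Real.Gamma (x + μ) * (x + μ) := by rw [mul_assoc, h2]
      have hm2 : x * (Real.Gamma x * (x + μ) ^ μ) ≤ x * (2 * Real.Gamma (x + μ)) := by
        nlinarith [mul_le_mul_of_nonneg_left hxx (le_of_lt hGxμ)]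
      exact le_of_mul_le_mul_left hm2 hx
    have s2 : 4 * z * (c + 1) * Real.Gamma x ≤ 2 * Real.Gamma (x + μ) := by
      calc 4 * z * (c + 1) * Real.Gamma x ≤ (x + μ) ^ μ * Real.Gamma x :=
            mul_le_mul_of_nonneg_right hQ4 (le_of_lt hGx)
        _ = Real.Gamma x * (x + μ) ^ μ := mul_comm _ _
        _ ≤ 2 * Real.Gamma (x + μ) := s1
    -- now the ratio bound
    have hfact : ((l + 1 : ℕ).factorial : ℝ) = (l + 1) * l.factorial := by
      push_cast [Nat.factorial_succ]; ring
    have hGcl1 : Real.Gamma (c + (l + 1 : ℕ)) = (c + l) * Real.Gamma (c + l) := by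
      have : c + ((l : ℝ) + 1) = (c + l) + 1 := by ring
      push_cast [this]
      exact Real.Gamma_add_one (ne_of_gt hcl)
    have hGarg : μ * ((l : ℕ) + 1 : ℕ) + b = x + μ := by push_cast; ring
    have hnum : Real.Gamma (c + ((l:ℕ) + 1 : ℕ)) * z ^ (l + 1) /
          (((l + 1 : ℕ).factorial) * Real.Gamma (μ * ((l:ℕ) + 1 : ℕ) + b))
        = ((c + l) * z * Real.Gamma x / ((l + 1) * Real.Gamma (x + μ))) *
          (Real.Gamma (c + l) * z ^ l / (l.factorial * Real.Gamma x)) := by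
      rw [hGcl1, hGarg, hfact]
      have hfp : (0:ℝ) < (l.factorial : ℝ) := by positivity
      field_simp
      ring
    have hratio : (c + l) * z * Real.Gamma x / ((l + 1) * Real.Gamma (x + μ)) ≤ 1 / 2 := by
      rw [div_le_div_iff₀ (by positivity) (by norm_num)]
      have hc5 : c + l ≤ (c + 1) * (l + 1) := by nlinarith [Nat.cast_nonneg (α := ℝ) l]
      have hzg : 0 ≤ z * Real.Gamma x := by positivity
      calc (c + l) * z * Real.Gamma x * 2
          = ((c + l) * (z * Real.Gamma x)) * 2 := by ring
        _ ≤ ((c + 1) * (l + 1) * (z * Real.Gamma x)) * 2 :=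
            mul_le_mul_of_nonneg_right (mul_le_mul_of_nonneg_right hc5 hzg) (by norm_num)
        _ = ((l:ℝ) + 1) / 2 * (4 * z * (c + 1) * Real.Gamma x) := by ring
        _ ≤ ((l:ℝ) + 1) / 2 * (2 * Real.Gamma (x + μ)) :=
            mul_le_mul_of_nonneg_left s2 (by positivity)
        _ = 1 * (((l:ℝ) + 1) * Real.Gamma (x + μ)) := by ring
    have hpos : 0 < Real.Gamma (c + l) * z ^ l / (l.factorial * Real.Gamma x) := by
      have : (0:ℝ) < z ^ l := pow_pos hzpos l
      positivity
    rw [Real.norm_eq_abs, Real.norm_eq_abs]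
    push_cast at hnum ⊢
    rw [hnum, abs_mul, abs_of_pos hpos]
    apply mul_le_mul_of_nonneg_right _ (le_of_lt hpos)
    rw [abs_of_nonneg (by positivity)]
    exact hratio



/-- Cdf of the fractional generalized compound process at Lévy times: with
`F_m = ℙ[Y₁+⋯+Y_m ≤ y]` and `W(y,u) = 𝟙_{y≥0} Γ(ϑ)E_{μ,ϑ}^{ζ}(−λu^θ) + ∑_{m≥1} P(m,u)F_m`,
one has `𝔼[W(y,H)] = 𝟙_{y≥0} Γ(ϑ) ∑_k (ζ)_k(−λ)^k/(k!Γ(μk+ϑ)) 𝔼[H^{θk}]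
 + Γ(ϑ) ∑_{m≥1} (λ^m(ζ)_m/m!) F_m ∑_l (ζ+m)_l(−λ)^l/(l!Γ(μ(l+m)+ϑ)) 𝔼[H^{θ(l+m)}]`. -/
theorem fgcp_levy_cdf {Ω : Type*} [MeasurableSpace Ω] (P : Measure Ω)
    [IsProbabilityMeasure P]
    (μ ϑ ζ θ lam : ℝ) (hμ : 0 < μ) (hμ1 : μ ≤ 1) (hζ : 0 < ζ) (hϑ : μ * ζ ≤ ϑ)
    (hθ : 0 < θ) (hθ1 : θ ≤ 1) (hlam : 0 < lam)
    (X : ℕ → Ω → ℝ) (hXm : ∀ i, Measurable (X i))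
    (hXindep : iIndepFun X P)
    (hXid : ∀ i, IdentDistrib (X i) (X 0) P P)
    (y : ℝ)
    (F : ℕ → ℝ) (hF : ∀ m, F m = (P {ω | ∑ i ∈ Finset.range m, X i ω ≤ y}).toReal)
    (H : Ω → ℝ) (hHm : Measurable H) (hH0 : ∀ ω, 0 ≤ H ω)
    (hint : Integrable (fun ω => mittagLeffler μ ϑ ζ (2 * lam * H ω ^ θ)) P)
    (W : ℝ → ℝ → ℝ)
    (hW : ∀ u, W y u = (if 0 ≤ y then Real.Gamma ϑ * mittagLeffler μ ϑ ζ (-(lam * u ^ θ))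
        else 0) + ∑' m : ℕ, fcpP μ ϑ ζ θ lam (m + 1) u * F (m + 1)) :
    (Summable fun k : ℕ =>
      |risingFactorial ζ k * (-lam) ^ k / (k.factorial * Real.Gamma (μ * k + ϑ)) *
        ∫ ω, H ω ^ (θ * (k : ℝ)) ∂P|) ∧
    (Summable fun p : ℕ × ℕ =>
      |lam ^ (p.1 + 1) * risingFactorial ζ (p.1 + 1) / (p.1 + 1).factorial * F (p.1 + 1) *
        (risingFactorial (ζ + (p.1 + 1)) p.2 * (-lam) ^ p.2 /
          (p.2.factorial * Real.Gamma (μ * ((p.2 : ℝ) + (p.1 + 1)) + ϑ))) *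
        ∫ ω, H ω ^ (θ * ((p.2 : ℝ) + (p.1 + 1))) ∂P|) ∧
    ((∫ ω, W y (H ω) ∂P)
      = (if 0 ≤ y then 1 else 0) * Real.Gamma ϑ *
          (∑' k : ℕ, risingFactorial ζ k * (-lam) ^ k /
            (k.factorial * Real.Gamma (μ * k + ϑ)) * ∫ ω, H ω ^ (θ * (k : ℝ)) ∂P)
        + Real.Gamma ϑ * ∑' m : ℕ,
            lam ^ (m + 1) * risingFactorial ζ (m + 1) / (m + 1).factorial * F (m + 1) *
              ∑' l : ℕ, risingFactorial (ζ + (m + 1)) l * (-lam) ^ l /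
                (l.factorial * Real.Gamma (μ * ((l : ℝ) + (m + 1)) + ϑ)) *
                ∫ ω, H ω ^ (θ * ((l : ℝ) + (m + 1))) ∂P) := by
  classical
  have hϑ0 : 0 < ϑ := lt_of_lt_of_le (mul_pos hμ hζ) hϑ
  have hΓϑ : 0 < Real.Gamma ϑ := Real.Gamma_pos_of_pos hϑ0
  set s : Ω → ℝ := fun ω => H ω ^ θ with hs_def
  have hs0 : ∀ ω, 0 ≤ s ω := fun ω => Real.rpow_nonneg (hH0 ω) θ
  have hsm : Measurable s := (Real.continuous_rpow_const hθ.le).measurable.comp hHm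
  set e : ℕ → ℝ := fun j => risingFactorial ζ j / (j.factorial * Real.Gamma (μ * j + ϑ))
    with he_def
  have hΓμ : ∀ j : ℕ, 0 < Real.Gamma (μ * j + ϑ) := fun j =>
    Real.Gamma_pos_of_pos (by positivity)
  have he_pos : ∀ j, 0 < e j := fun j => by
    rw [he_def]
    exact div_pos (rising_pos hζ j) (by positivity)
  -- Mittag-Leffler series
  have hML : ∀ z : ℝ, mittagLeffler μ ϑ ζ z = ∑' j : ℕ, e j * z ^ j := by
    intro z; unfold mittagLeffler
    exact tsum_congr fun j => by rw [he_def]; ring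
  have hMLsum : ∀ z : ℝ, Summable fun j : ℕ => e j * z ^ j := by
    intro z
    have h0 := aux_summable (c := ζ) hμ hμ1 hϑ0 hζ (abs_nonneg z)
    have h1 := h0.mul_left (1 / Real.Gamma ζ)
    apply Summable.of_abs
    refine h1.congr fun j => ?_
    have habs : |e j * z ^ j| = e j * |z| ^ j := by
      rw [abs_mul, abs_of_nonneg (he_pos j).le, abs_pow]
    rw [habs]
    simp only [he_def]
    unfold risingFactorial
    have h4 : Real.Gamma ζ ≠ 0 := ne_of_gt (Real.Gamma_pos_of_pos hζ)
    have h5 : ((j.factorial : ℝ)) * Real.Gamma (μ * j + ϑ) ≠ 0 := by positivity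
    field_simp
  have hΨs : ∀ (c : ℝ) (ω : Ω), Summable fun j : ℕ => e j * c ^ j * s ω ^ j := fun c ω =>
    (hMLsum (c * s ω)).congr fun j => by rw [mul_pow]; ring
  have hΦeq : ∀ ω, mittagLeffler μ ϑ ζ (2 * lam * H ω ^ θ)
      = ∑' j : ℕ, e j * (2 * lam) ^ j * s ω ^ j := by
    intro ω; rw [hML]
    exact tsum_congr fun j => by rw [hs_def, mul_pow]; ring
  -- moments
  set Mom : ℕ → ℝ := fun j => ∫ ω, s ω ^ j ∂P with hMom_def
  set Lmom : ℕ → ℝ≥0∞ := fun j => ∫⁻ ω, ENNReal.ofReal (s ω ^ j) ∂P with hLmom_def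
  have hMom0 : ∀ j, 0 ≤ Mom j := fun j => integral_nonneg fun ω => pow_nonneg (hs0 ω) j
  have hMomL : ∀ j, Mom j = (Lmom j).toReal := fun j =>
    integral_eq_lintegral_of_nonneg_ae (ae_of_all _ fun ω => pow_nonneg (hs0 ω) j)
      (hsm.pow_const j).aestronglyMeasurable
  have hKey : (∑' j : ℕ, ENNReal.ofReal (e j * (2 * lam) ^ j) * Lmom j) ≠ ⊤ := by
    have h2 := hint.hasFiniteIntegral
    rw [hasFiniteIntegral_iff_ofReal (ae_of_all _ fun ω => by
      rw [hΦeq]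
      exact tsum_nonneg fun j =>
        mul_nonneg (mul_nonneg (he_pos j).le (by positivity)) (pow_nonneg (hs0 ω) j))] at h2
    have h3 : ∫⁻ ω, ENNReal.ofReal (mittagLeffler μ ϑ ζ (2 * lam * H ω ^ θ)) ∂P
        = ∑' j : ℕ, ENNReal.ofReal (e j * (2 * lam) ^ j) * Lmom j := by
      calc ∫⁻ ω, ENNReal.ofReal (mittagLeffler μ ϑ ζ (2 * lam * H ω ^ θ)) ∂P
          = ∫⁻ ω, ∑' j : ℕ, ENNReal.ofReal (e j * (2 * lam) ^ j * s ω ^ j) ∂P :=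
            lintegral_congr fun ω => by
              rw [hΦeq ω, ENNReal.ofReal_tsum_of_nonneg (fun j =>
                mul_nonneg (mul_nonneg (he_pos j).le (by positivity)) (pow_nonneg (hs0 ω) j))
                (hΨs _ ω)]
        _ = ∑' j : ℕ, ∫⁻ ω, ENNReal.ofReal (e j * (2 * lam) ^ j * s ω ^ j) ∂P :=
            lintegral_tsum fun j =>
              (((hsm.pow_const j).const_mul _).ennreal_ofReal).aemeasurable
        _ = ∑' j : ℕ, ENNReal.ofReal (e j * (2 * lam) ^ j) * Lmom j := by
            refine tsum_congr fun j => ?_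
            simp only [hLmom_def]
            rw [← lintegral_const_mul' _ _ ENNReal.ofReal_ne_top]
            exact lintegral_congr fun ω =>
              ENNReal.ofReal_mul (mul_nonneg (he_pos j).le (by positivity))
    rw [← h3]; exact h2.ne
  have hLfin : ∀ j, Lmom j ≠ ⊤ := by
    intro j
    have h1 := ENNReal.ne_top_of_tsum_ne_top hKey j
    intro hc
    rw [hc, ENNReal.mul_top (by
      simp only [ne_eq, ENNReal.ofReal_eq_zero, not_le]
      exact mul_pos (he_pos j) (by positivity))] at h1
    exact h1 rfl
  have hMomOf : ∀ j, ENNReal.ofReal (Mom j) = Lmom j := fun j => by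
    rw [hMomL j, ENNReal.ofReal_toReal (hLfin j)]
  have SB : Summable fun j : ℕ => e j * (2 * lam) ^ j * Mom j := by
    have h1 := ENNReal.summable_toReal hKey
    refine h1.congr fun j => ?_
    rw [← hMomOf, ← ENNReal.ofReal_mul (mul_nonneg (he_pos j).le (by positivity)),
      ENNReal.toReal_ofReal
        (mul_nonneg (mul_nonneg (he_pos j).le (by positivity)) (hMom0 j))]
  -- lintegral of norms helper
  have hlint : ∀ (c : ℝ) (i : ℕ), (∫⁻ ω, ‖c * s ω ^ i‖ₑ ∂P) = ENNReal.ofReal (|c| * Mom i) := by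
    intro c i
    have h1 : ∀ ω, ‖c * s ω ^ i‖ₑ = ENNReal.ofReal |c| * ENNReal.ofReal (s ω ^ i) := by
      intro ω
      rw [← ofReal_norm_eq_enorm, Real.norm_eq_abs, abs_mul,
        abs_of_nonneg (pow_nonneg (hs0 ω) i), ENNReal.ofReal_mul (abs_nonneg c)]
    rw [lintegral_congr h1, lintegral_const_mul' _ _ ENNReal.ofReal_ne_top,
      ENNReal.ofReal_mul (abs_nonneg c), hMomOf i]
  -- goal integral rewrites
  have hpow : ∀ (ω : Ω) (i : ℕ), H ω ^ (θ * (i : ℝ)) = s ω ^ i := by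
    intro ω i
    rw [hs_def, Real.rpow_mul (hH0 ω), Real.rpow_natCast]
  have hMomEq1 : ∀ k : ℕ, (∫ ω, H ω ^ (θ * (k : ℝ)) ∂P) = Mom k := fun k => by
    simp only [hMom_def]
    exact integral_congr_ae (ae_of_all _ fun ω => hpow ω k)
  have hMomEq2 : ∀ m l : ℕ,
      (∫ ω, H ω ^ (θ * ((l : ℝ) + ((m : ℝ) + 1))) ∂P) = Mom (m + 1 + l) := by
    intro m l
    have hc2 : θ * ((l : ℝ) + ((m : ℝ) + 1)) = θ * ((m + 1 + l : ℕ) : ℝ) := by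
      push_cast; ring
    rw [hc2]
    exact hMomEq1 (m + 1 + l)
  -- F bounds
  have hF0 : ∀ m, 0 ≤ F m := fun m => by rw [hF m]; exact ENNReal.toReal_nonneg
  have hF1 : ∀ m, F m ≤ 1 := fun m => by
    rw [hF m]
    exact ENNReal.toReal_le_of_le_ofReal zero_le_one (by simpa using prob_le_one)
  -- coefficient functions
  set Cm : ℕ → ℝ := fun m =>
    lam ^ (m + 1) * risingFactorial ζ (m + 1) / ((m + 1).factorial : ℝ) * F (m + 1)
    with hCm_def
  set D : ℕ → ℕ → ℝ := fun m l =>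
    risingFactorial (ζ + ((m : ℝ) + 1)) l * (-lam) ^ l /
      ((l.factorial : ℝ) * Real.Gamma (μ * ((l : ℝ) + ((m : ℝ) + 1)) + ϑ)) with hD_def
  set Dabs : ℕ → ℕ → ℝ := fun m l =>
    risingFactorial (ζ + ((m : ℝ) + 1)) l * lam ^ l /
      ((l.factorial : ℝ) * Real.Gamma (μ * ((l : ℝ) + ((m : ℝ) + 1)) + ϑ)) with hDabs_def
  have hΓml : ∀ m l : ℕ, 0 < Real.Gamma (μ * ((l : ℝ) + ((m : ℝ) + 1)) + ϑ) := fun m l =>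
    Real.Gamma_pos_of_pos (by positivity)
  have hrFp : ∀ m l : ℕ, 0 < risingFactorial (ζ + ((m : ℝ) + 1)) l := fun m l =>
    rising_pos (by positivity) l
  have hCm0 : ∀ m, 0 ≤ Cm m := by
    intro m
    simp only [hCm_def]
    exact mul_nonneg (div_nonneg (mul_nonneg (by positivity) (rising_pos hζ (m + 1)).le)
      (by positivity)) (hF0 _)
  have hDabs0 : ∀ m l, 0 ≤ Dabs m l := by
    intro m l
    simp only [hDabs_def]
    exact div_nonneg (mul_nonneg (hrFp m l).le (by positivity))
      (mul_nonneg (by positivity) (hΓml m l).le)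
  have hDabsD : ∀ m l, |D m l| = Dabs m l := by
    intro m l
    have h1 : D m l = (-1) ^ l * Dabs m l := by
      simp only [hD_def, hDabs_def]
      rw [neg_pow lam l]
      ring
    rw [h1, abs_mul, abs_pow, abs_neg, abs_one, one_pow, one_mul, abs_of_nonneg (hDabs0 m l)]
  -- the choose bound
  have hchoose : ∀ p : ℕ × ℕ, Cm p.1 * Dabs p.1 p.2 ≤
      (((p.1 + 1 + p.2).choose (p.1 + 1) : ℕ) : ℝ) * (e (p.1 + 1 + p.2) * lam ^ (p.1 + 1 + p.2)) := by
    rintro ⟨m, l⟩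
    have hrm : risingFactorial ζ (m + 1) * risingFactorial (ζ + ((m : ℝ) + 1)) l
        = risingFactorial ζ (m + 1 + l) := by
      have := rising_mul hζ (m + 1) l
      push_cast at this
      convert this using 3 <;> push_cast <;> ring
    have h2 : (((m + 1 + l).choose (m + 1) : ℕ) : ℝ) * ((m + 1).factorial : ℝ) *
        (l.factorial : ℝ) = ((m + 1 + l).factorial : ℝ) := by
      have hsym : (m + 1 + l).choose (m + 1) = (m + 1 + l).choose l := by
        rw [← Nat.choose_symm (by omega : m + 1 ≤ m + 1 + l)]
        congr 1
        omega
      rw [hsym]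
      exact_mod_cast congrArg (Nat.cast (R := ℝ))
        (Nat.add_choose_mul_factorial_mul_factorial (m + 1) l)
    have h4 : Real.Gamma (μ * ((l : ℝ) + ((m : ℝ) + 1)) + ϑ)
        = Real.Gamma (μ * ((m + 1 + l : ℕ) : ℝ) + ϑ) := by
      congr 1; push_cast; ring
    have heq : Cm m * Dabs m l = F (m + 1) *
        ((((m + 1 + l).choose (m + 1) : ℕ) : ℝ) * (e (m + 1 + l) * lam ^ (m + 1 + l))) := by
      simp only [hCm_def, hDabs_def, he_def]
      rw [h4]
      rw [← hrm, ← h2]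
      have c1 : ((m + 1).factorial : ℝ) ≠ 0 := by positivity
      have c2 : ((l.factorial : ℝ)) ≠ 0 := by positivity
      have c3 : Real.Gamma (μ * ((m + 1 + l : ℕ) : ℝ) + ϑ) ≠ 0 := (hΓμ (m + 1 + l)).ne'
      have c4 : (((m + 1 + l).choose (m + 1) : ℕ) : ℝ) ≠ 0 := by
        have := Nat.choose_pos (by omega : m + 1 ≤ m + 1 + l)
        positivity
      field_simp
      ring
    rw [heq]
    have hX0 : 0 ≤ (((m + 1 + l).choose (m + 1) : ℕ) : ℝ) *
        (e (m + 1 + l) * lam ^ (m + 1 + l)) := by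
      exact mul_nonneg (by positivity) (mul_nonneg (he_pos _).le (by positivity))
    calc F (m + 1) * _ ≤ 1 * ((((m + 1 + l).choose (m + 1) : ℕ) : ℝ) *
          (e (m + 1 + l) * lam ^ (m + 1 + l))) := mul_le_mul_of_nonneg_right (hF1 _) hX0
      _ = _ := one_mul _
  -- master comparison lemma
  have keylem : ∀ M : ℕ → ℝ, (∀ i, 0 ≤ M i) → (Summable fun i => e i * (2 * lam) ^ i * M i) →
      (Summable fun p : ℕ × ℕ => Cm p.1 * Dabs p.1 p.2 * M (p.1 + 1 + p.2)) ∧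
      (∑' p : ℕ × ℕ, Cm p.1 * Dabs p.1 p.2 * M (p.1 + 1 + p.2))
        ≤ ∑' i : ℕ, e i * (2 * lam) ^ i * M i := by
    intro M hM0 hMsum
    set G : ℕ × ℕ → ℝ := fun q => ((q.1.choose q.2 : ℕ) : ℝ) * (e q.1 * lam ^ q.1 * M q.1)
      with hG_def
    have hG0 : 0 ≤ G := by
      intro q
      simp only [hG_def]
      exact mul_nonneg (by positivity)
        (mul_nonneg (mul_nonneg (he_pos _).le (by positivity)) (hM0 _))
    have htsumG : ∀ i : ℕ, (∑' n : ℕ, G (i, n)) = e i * (2 * lam) ^ i * M i := by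
      intro i
      simp only [hG_def]
      rw [tsum_mul_right]
      have hch : (∑' n : ℕ, ((i.choose n : ℕ) : ℝ)) = 2 ^ i := by
        rw [tsum_eq_sum (s := Finset.range (i + 1)) (fun n hn => by
          rw [Nat.choose_eq_zero_of_lt (by simpa using Finset.mem_range.not.mp hn)]
          simp)]
        exact_mod_cast Nat.sum_range_choose i
      rw [hch, mul_pow]
      ring
    have hGsum : Summable G := by
      rw [summable_prod_of_nonneg hG0]
      constructor
      · intro i
        apply summable_of_ne_finset_zero (s := Finset.range (i + 1))
        intro n hn
        simp only [hG_def]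
        rw [Nat.choose_eq_zero_of_lt (by simpa using Finset.mem_range.not.mp hn)]
        simp
      · exact (summable_congr htsumG).2 hMsum
    have hι : Function.Injective (fun p : ℕ × ℕ => ((p.1 + 1 + p.2, p.1 + 1) : ℕ × ℕ)) := by
      rintro ⟨a, b⟩ ⟨c, d⟩ h
      simp only [Prod.mk.injEq] at h
      obtain ⟨h1, h2⟩ := h
      simp only [Prod.mk.injEq]
      omega
    have hle : ∀ p : ℕ × ℕ, Cm p.1 * Dabs p.1 p.2 * M (p.1 + 1 + p.2)
        ≤ G (p.1 + 1 + p.2, p.1 + 1) := by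
      intro p
      have h1 := mul_le_mul_of_nonneg_right (hchoose p) (hM0 (p.1 + 1 + p.2))
      calc Cm p.1 * Dabs p.1 p.2 * M (p.1 + 1 + p.2) ≤
          (((p.1 + 1 + p.2).choose (p.1 + 1) : ℕ) : ℝ) *
            (e (p.1 + 1 + p.2) * lam ^ (p.1 + 1 + p.2)) * M (p.1 + 1 + p.2) := h1
        _ = G (p.1 + 1 + p.2, p.1 + 1) := by simp only [hG_def]; ring
    have hGι : Summable ((fun q : ℕ × ℕ => G q) ∘ (fun p : ℕ × ℕ => (p.1 + 1 + p.2, p.1 + 1))) :=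
      hGsum.comp_injective hι
    have h00 : ∀ p : ℕ × ℕ, 0 ≤ Cm p.1 * Dabs p.1 p.2 * M (p.1 + 1 + p.2) := fun p =>
      mul_nonneg (mul_nonneg (hCm0 _) (hDabs0 _ _)) (hM0 _)
    have hsum2 : Summable fun p : ℕ × ℕ => Cm p.1 * Dabs p.1 p.2 * M (p.1 + 1 + p.2) :=
      Summable.of_nonneg_of_le h00 hle hGι
    refine ⟨hsum2, ?_⟩
    calc (∑' p : ℕ × ℕ, Cm p.1 * Dabs p.1 p.2 * M (p.1 + 1 + p.2))
        ≤ ∑' p : ℕ × ℕ, G (p.1 + 1 + p.2, p.1 + 1) := Summable.tsum_le_tsum hle hsum2 hGι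
      _ ≤ ∑' q : ℕ × ℕ, G q := Summable.tsum_le_tsum_of_inj _ hι (fun c _ => hG0 c)
          (fun p => le_rfl) hGι hGsum
      _ = ∑' (i : ℕ) (n : ℕ), G (i, n) := Summable.tsum_prod hGsum
      _ = ∑' i : ℕ, e i * (2 * lam) ^ i * M i := tsum_congr htsumG
  -- summable comparison for the k-series
  have hsum_ek : Summable fun k : ℕ => e k * lam ^ k * Mom k := by
    refine SB.of_nonneg_of_le (fun k =>
      mul_nonneg (mul_nonneg (he_pos k).le (by positivity)) (hMom0 k)) (fun k => ?_)
    exact mul_le_mul_of_nonneg_right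
      (mul_le_mul_of_nonneg_left (pow_le_pow_left₀ hlam.le (by linarith) k) (he_pos k).le)
      (hMom0 k)
  refine ⟨?_, ?_, ?_⟩
  · -- Conclusion 1
    refine hsum_ek.congr fun k => ?_
    rw [hMomEq1 k]
    have h1 : risingFactorial ζ k * (-lam) ^ k / ((k.factorial : ℝ) *
        Real.Gamma (μ * (k : ℝ) + ϑ)) * Mom k = (-1) ^ k * (e k * lam ^ k * Mom k) := by
      simp only [he_def]
      rw [neg_pow]
      ring
    rw [h1, abs_mul, abs_pow, abs_neg, abs_one, one_pow, one_mul,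
      abs_of_nonneg (mul_nonneg (mul_nonneg (he_pos k).le (by positivity)) (hMom0 k))]
  · -- Conclusion 2
    refine ((keylem Mom hMom0 SB).1).congr fun p => ?_
    rw [hMomEq2 p.1 p.2]
    have habs2 : |Cm p.1 * D p.1 p.2 * Mom (p.1 + 1 + p.2)|
        = Cm p.1 * Dabs p.1 p.2 * Mom (p.1 + 1 + p.2) := by
      rw [abs_mul, abs_mul, hDabsD, abs_of_nonneg (hCm0 _), abs_of_nonneg (hMom0 _)]
    exact habs2.symm
  · -- Main identity
    simp_rw [hMomEq1, hMomEq2]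
    -- the pair summands
    set hp : ℕ × ℕ → Ω → ℝ := fun p ω =>
      Real.Gamma ϑ * Cm p.1 * D p.1 p.2 * s ω ^ (p.1 + 1 + p.2) with hhp_def
    have habs_hp : ∀ (p : ℕ × ℕ) (ω : Ω), |hp p ω|
        = Real.Gamma ϑ * (Cm p.1 * Dabs p.1 p.2 * s ω ^ (p.1 + 1 + p.2)) := by
      intro p ω
      simp only [hhp_def]
      rw [abs_mul, abs_mul, abs_mul, hDabsD, abs_of_nonneg hΓϑ.le, abs_of_nonneg (hCm0 _),
        abs_of_nonneg (pow_nonneg (hs0 ω) _)]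
      ring
    have hp_abs_sum : ∀ ω, Summable fun p : ℕ × ℕ => |hp p ω| := by
      intro ω
      have h1 := ((keylem (fun i => s ω ^ i) (fun i => pow_nonneg (hs0 ω) i)
        (hΨs (2 * lam) ω)).1).mul_left (Real.Gamma ϑ)
      exact h1.congr fun p => (habs_hp p ω).symm
    have hp_sum : ∀ ω, Summable fun p : ℕ × ℕ => hp p ω := fun ω => (hp_abs_sum ω).of_abs
    have hp_meas : ∀ p : ℕ × ℕ, Measurable fun ω => hp p ω := by
      intro p
      simp only [hhp_def]
      exact (hsm.pow_const _).const_mul _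
    -- pointwise expansion of fcpP
    have hPF : ∀ (m : ℕ) (ω : Ω),
        fcpP μ ϑ ζ θ lam (m + 1) (H ω) * F (m + 1) = ∑' l : ℕ, hp (m, l) ω := by
      intro m ω
      unfold fcpP
      rw [mul_comm _ (F (m + 1)), ← mul_assoc, ← tsum_mul_left]
      refine tsum_congr fun l => ?_
      have hΓeq : Real.Gamma (μ * (((m + 1) + l : ℕ) : ℝ) + ϑ)
          = Real.Gamma (μ * ((l : ℝ) + ((m : ℝ) + 1)) + ϑ) := by
        congr 1; push_cast; ring
      have hrFeq : (ζ + (((m + 1) : ℕ) : ℝ)) = ζ + ((m : ℝ) + 1) := by push_cast; ring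
      rw [hΓeq, hrFeq]
      simp only [hhp_def, hCm_def, hD_def, hs_def]
      have c1 : ((m + 1).factorial : ℝ) ≠ 0 := by positivity
      have c2 : ((l.factorial : ℝ)) ≠ 0 := by positivity
      have c3 : Real.Gamma (μ * ((l : ℝ) + ((m : ℝ) + 1)) + ϑ) ≠ 0 := (hΓml m l).ne'
      have hq1 : (lam * H ω ^ θ) ^ (m + 1) = lam ^ (m + 1) * (H ω ^ θ) ^ (m + 1) := mul_pow ..
      have hq2 : (-(lam * H ω ^ θ)) ^ l = (-lam) ^ l * (H ω ^ θ) ^ l := by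
        rw [← neg_mul, mul_pow]
      rw [hq1, hq2]
      field_simp
      ring
    have hf2eq : ∀ ω, (∑' m : ℕ, fcpP μ ϑ ζ θ lam (m + 1) (H ω) * F (m + 1))
        = ∑' p : ℕ × ℕ, hp p ω := by
      intro ω
      rw [Summable.tsum_prod (hp_sum ω)]
      exact tsum_congr fun m => hPF m ω
    have hf2meas : Measurable fun ω => ∑' p : ℕ × ℕ, hp p ω :=
      measurable_tsum_real hp_meas hp_sum
    have hbound2 : ∀ ω, ‖∑' p : ℕ × ℕ, hp p ω‖
        ≤ Real.Gamma ϑ * mittagLeffler μ ϑ ζ (2 * lam * H ω ^ θ) := by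
      intro ω
      have h1 : ‖∑' p : ℕ × ℕ, hp p ω‖ ≤ ∑' p : ℕ × ℕ, ‖hp p ω‖ :=
        norm_tsum_le_tsum_norm (by simpa [Real.norm_eq_abs] using hp_abs_sum ω)
      have h2 : (∑' p : ℕ × ℕ, ‖hp p ω‖) = Real.Gamma ϑ *
          ∑' p : ℕ × ℕ, Cm p.1 * Dabs p.1 p.2 * s ω ^ (p.1 + 1 + p.2) := by
        rw [← tsum_mul_left]
        exact tsum_congr fun p => by rw [Real.norm_eq_abs, habs_hp p ω]
      have h3 := (keylem (fun i => s ω ^ i) (fun i => pow_nonneg (hs0 ω) i)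
        (hΨs (2 * lam) ω)).2
      refine h1.trans ?_
      rw [h2, hΦeq ω]
      exact mul_le_mul_of_nonneg_left h3 hΓϑ.le
    have hf2int : Integrable (fun ω => ∑' p : ℕ × ℕ, hp p ω) P :=
      (hint.const_mul (Real.Gamma ϑ)).mono' hf2meas.aestronglyMeasurable (ae_of_all _ hbound2)
    -- f1 facts
    have hMLneg : ∀ ω, mittagLeffler μ ϑ ζ (-(lam * H ω ^ θ))
        = ∑' k : ℕ, e k * (-lam) ^ k * s ω ^ k := by
      intro ω
      rw [hML]
      refine tsum_congr fun k => ?_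
      simp only [hs_def]
      rw [show -(lam * H ω ^ θ) = (-lam) * (H ω ^ θ) by ring, mul_pow]
      ring
    have hf1meas : Measurable fun ω =>
        Real.Gamma ϑ * mittagLeffler μ ϑ ζ (-(lam * H ω ^ θ)) := by
      have h1 : (fun ω => Real.Gamma ϑ * mittagLeffler μ ϑ ζ (-(lam * H ω ^ θ)))
          = fun ω => ∑' k : ℕ, (Real.Gamma ϑ * (e k * (-lam) ^ k)) * s ω ^ k := by
        funext ω
        rw [hMLneg ω, ← tsum_mul_left]
        exact tsum_congr fun k => by ring
      rw [h1]
      exact measurable_tsum_real (fun k => (hsm.pow_const _).const_mul _) (fun ω =>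
        ((hΨs (-lam) ω).mul_left (Real.Gamma ϑ)).congr fun k => by ring)
    have habs_neg : ∀ (ω : Ω) (k : ℕ), |e k * (-lam) ^ k * s ω ^ k|
        = e k * lam ^ k * s ω ^ k := by
      intro ω k
      rw [show e k * (-lam) ^ k * s ω ^ k = (-1) ^ k * (e k * lam ^ k * s ω ^ k) by
        rw [neg_pow]; ring]
      rw [abs_mul, abs_pow, abs_neg, abs_one, one_pow, one_mul, abs_of_nonneg
        (mul_nonneg (mul_nonneg (he_pos k).le (by positivity)) (pow_nonneg (hs0 ω) k))]
    have hbound1 : ∀ ω, ‖Real.Gamma ϑ * mittagLeffler μ ϑ ζ (-(lam * H ω ^ θ))‖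
        ≤ Real.Gamma ϑ * mittagLeffler μ ϑ ζ (2 * lam * H ω ^ θ) := by
      intro ω
      rw [Real.norm_eq_abs, abs_mul, abs_of_nonneg hΓϑ.le]
      refine mul_le_mul_of_nonneg_left ?_ hΓϑ.le
      rw [hMLneg ω, hΦeq ω]
      have hsabs : Summable fun k : ℕ => |e k * (-lam) ^ k * s ω ^ k| :=
        (hΨs lam ω).congr fun k => (habs_neg ω k).symm
      have h1 := norm_tsum_le_tsum_norm (f := fun k : ℕ => e k * (-lam) ^ k * s ω ^ k)
        (by simpa only [Real.norm_eq_abs] using hsabs)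
      rw [Real.norm_eq_abs] at h1
      refine (h1.trans (Summable.tsum_le_tsum (fun k => ?_) (by
        simpa only [Real.norm_eq_abs] using hsabs) (hΨs (2*lam) ω)))
      rw [Real.norm_eq_abs, habs_neg ω k]
      exact mul_le_mul_of_nonneg_right
        (mul_le_mul_of_nonneg_left (pow_le_pow_left₀ hlam.le (by linarith) k) (he_pos k).le)
        (pow_nonneg (hs0 ω) k)
    have hf1int : Integrable (fun ω =>
        if 0 ≤ y then Real.Gamma ϑ * mittagLeffler μ ϑ ζ (-(lam * H ω ^ θ)) else 0) P := by
      by_cases hy : 0 ≤ y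
      · simp only [if_pos hy]
        exact (hint.const_mul _).mono' hf1meas.aestronglyMeasurable (ae_of_all _ hbound1)
      · simp only [if_neg hy]
        exact integrable_zero _ _ _
    -- integral of f1
    have hint_f1 : (∫ ω, Real.Gamma ϑ * mittagLeffler μ ϑ ζ (-(lam * H ω ^ θ)) ∂P)
        = Real.Gamma ϑ * ∑' k : ℕ, e k * (-lam) ^ k * Mom k := by
      rw [integral_const_mul]
      congr 1
      rw [integral_congr_ae (ae_of_all _ fun ω => hMLneg ω)]
      rw [integral_tsum (fun k => ((hsm.pow_const k).const_mul _).aestronglyMeasurable) ?_]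
      · exact tsum_congr fun k => by rw [integral_const_mul]
      · have h1 : ∀ k : ℕ, (∫⁻ ω, ‖(e k * (-lam) ^ k) * s ω ^ k‖ₑ ∂P)
            = ENNReal.ofReal (e k * lam ^ k * Mom k) := by
          intro k
          rw [hlint (e k * (-lam) ^ k) k]
          congr 1
          rw [abs_mul, abs_pow, abs_neg, abs_of_nonneg (he_pos k).le, abs_of_nonneg hlam.le]
        rw [tsum_congr h1, ← ENNReal.ofReal_tsum_of_nonneg (fun k =>
          mul_nonneg (mul_nonneg (he_pos k).le (by positivity)) (hMom0 k)) hsum_ek]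
        exact ENNReal.ofReal_ne_top
    -- integral of the pair sum
    have hsumDMom : Summable fun p : ℕ × ℕ =>
        Real.Gamma ϑ * Cm p.1 * D p.1 p.2 * Mom (p.1 + 1 + p.2) := by
      apply Summable.of_abs
      have h1 := ((keylem Mom hMom0 SB).1).mul_left (Real.Gamma ϑ)
      refine h1.congr fun p => ?_
      rw [abs_mul, abs_mul, abs_mul, hDabsD, abs_of_nonneg hΓϑ.le, abs_of_nonneg (hCm0 _),
        abs_of_nonneg (hMom0 _)]
      ring
    have hcond2 : (∑' p : ℕ × ℕ, ∫⁻ ω, ‖hp p ω‖ₑ ∂P) ≠ ⊤ := by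
      have h1 : ∀ p : ℕ × ℕ, (∫⁻ ω, ‖hp p ω‖ₑ ∂P)
          = ENNReal.ofReal (Real.Gamma ϑ * (Cm p.1 * Dabs p.1 p.2 * Mom (p.1 + 1 + p.2))) := by
        intro p
        simp only [hhp_def]
        rw [hlint (Real.Gamma ϑ * Cm p.1 * D p.1 p.2) (p.1 + 1 + p.2)]
        congr 1
        rw [abs_mul, abs_mul, hDabsD, abs_of_nonneg hΓϑ.le, abs_of_nonneg (hCm0 _)]
        ring
      rw [tsum_congr h1, ← ENNReal.ofReal_tsum_of_nonneg (fun p =>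
        mul_nonneg hΓϑ.le (mul_nonneg (mul_nonneg (hCm0 _) (hDabs0 _ _)) (hMom0 _)))
        (((keylem Mom hMom0 SB).1).mul_left (Real.Gamma ϑ))]
      exact ENNReal.ofReal_ne_top
    have hint_f2 : (∫ ω, (∑' p : ℕ × ℕ, hp p ω) ∂P)
        = ∑' p : ℕ × ℕ, Real.Gamma ϑ * Cm p.1 * D p.1 p.2 * Mom (p.1 + 1 + p.2) := by
      rw [integral_tsum (fun p => (hp_meas p).aestronglyMeasurable) hcond2]
      refine tsum_congr fun p => ?_
      simp only [hhp_def]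
      rw [integral_const_mul]
    -- assembly
    have hsplit : (fun ω => W y (H ω)) = fun ω =>
        (if 0 ≤ y then Real.Gamma ϑ * mittagLeffler μ ϑ ζ (-(lam * H ω ^ θ)) else 0)
          + ∑' p : ℕ × ℕ, hp p ω := funext fun ω => by rw [hW (H ω), hf2eq ω]
    rw [hsplit, integral_add hf1int hf2int]
    have piece1 : (∫ ω, (if 0 ≤ y then
        Real.Gamma ϑ * mittagLeffler μ ϑ ζ (-(lam * H ω ^ θ)) else 0) ∂P)
        = (if 0 ≤ y then 1 else 0) * Real.Gamma ϑ *
          ∑' k : ℕ, risingFactorial ζ k * (-lam) ^ k /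
            ((k.factorial : ℝ) * Real.Gamma (μ * (k : ℝ) + ϑ)) * Mom k := by
      by_cases hy : 0 ≤ y
      · simp only [if_pos hy, one_mul]
        rw [hint_f1]
        congr 1
        refine tsum_congr fun k => ?_
        simp only [he_def]
        ring
      · simp only [if_neg hy, zero_mul]
        exact integral_zero _ _
    have piece2 : (∑' p : ℕ × ℕ, Real.Gamma ϑ * Cm p.1 * D p.1 p.2 * Mom (p.1 + 1 + p.2))
        = Real.Gamma ϑ * ∑' m : ℕ, Cm m * ∑' l : ℕ, D m l * Mom (m + 1 + l) := by
      rw [Summable.tsum_prod hsumDMom]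
      calc (∑' (m : ℕ) (l : ℕ), Real.Gamma ϑ * Cm m * D m l * Mom (m + 1 + l))
          = ∑' m : ℕ, Real.Gamma ϑ * (Cm m * ∑' l : ℕ, D m l * Mom (m + 1 + l)) := by
            refine tsum_congr fun m => ?_
            calc (∑' l : ℕ, Real.Gamma ϑ * Cm m * D m l * Mom (m + 1 + l))
                = ∑' l : ℕ, Real.Gamma ϑ * (Cm m * (D m l * Mom (m + 1 + l))) :=
                  tsum_congr fun l => by ring
              _ = Real.Gamma ϑ * ∑' l : ℕ, Cm m * (D m l * Mom (m + 1 + l)) := tsum_mul_left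
              _ = Real.Gamma ϑ * (Cm m * ∑' l : ℕ, D m l * Mom (m + 1 + l)) := by
                  rw [tsum_mul_left]
        _ = Real.Gamma ϑ * ∑' m : ℕ, Cm m * ∑' l : ℕ, D m l * Mom (m + 1 + l) :=
            tsum_mul_left
    rw [piece1, hint_f2, piece2]
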